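/- arXiv:2304.01639 — 2 statements merged into one kernel-verified Lean document; each statement's English description precedes it below -/
import Mathlib

section
/- Let n be a positive integer, σ ≥ 0 a real number, and let ω be a random vector in ℝⁿ whose law is the product measure of n independent one-dimensional Gaussian measures N(0,σ²). Let W be a symmetric real n×n matrix, let a ∈ ℝⁿ be a fixed vector, and let κ ∈ ℝ be a fixed constant. Then the variance of the random variable (a + ω)ᵀ W (a + ω) + κ equals 4σ²·aᵀWᵀWa + 2σ⁴·tr(WᵀW); i.e. ∫ ((a+ω)ᵀW(a+ω) + κ − (aᵀWa + σ²tr(W) + κ))² dP(ω) = 4σ²·‖Wa‖² + 2σ⁴·tr(WᵀW). -/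
open MeasureTheory ProbabilityTheory Matrix


open MeasureTheory ProbabilityTheory Real Filter Asymptotics
open scoped NNReal ENNReal

lemma integrable_pow_mul_exp_neg_mul_sq' {b : ℝ} (hb : 0 < b) (k : ℕ) :
    Integrable fun x : ℝ => x ^ k * Real.exp (-b * x ^ 2) := by
  have h := integrable_rpow_mul_exp_neg_mul_sq hb (s := (k : ℝ))
    (lt_of_lt_of_le neg_one_lt_zero (Nat.cast_nonneg k))
  simpa [Real.rpow_natCast] using h

lemma tendsto_pow_mul_exp_neg_mul_sq_atTop {b : ℝ} (hb : 0 < b) (k : ℕ) :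
    Tendsto (fun x : ℝ => x ^ k * Real.exp (-b * x ^ 2)) atTop (nhds 0) := by
  have h := rpow_mul_exp_neg_mul_sq_isLittleO_exp_neg hb (k : ℝ)
  simp_rw [Real.rpow_natCast] at h
  have h3 : Tendsto (fun x : ℝ => (1:ℝ)/2 * x) atTop atTop :=
    tendsto_id.const_mul_atTop (by norm_num)
  have h2 := Real.tendsto_exp_neg_atTop_nhds_zero.comp h3
  exact h.isBigO.trans_tendsto (h2.congr fun x => by norm_num [Function.comp])

lemma tendsto_pow_mul_exp_neg_mul_sq_atBot {b : ℝ} (hb : 0 < b) (k : ℕ) :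
    Tendsto (fun x : ℝ => x ^ k * Real.exp (-b * x ^ 2)) atBot (nhds 0) := by
  have h := ((tendsto_pow_mul_exp_neg_mul_sq_atTop hb k).const_mul ((-1 : ℝ) ^ k)).comp
    tendsto_neg_atBot_atTop
  simp only [mul_zero] at h
  refine h.congr fun x => ?_
  show (-1 : ℝ) ^ k * ((-x) ^ k * Real.exp (-b * (-x) ^ 2)) = _
  rw [← mul_assoc, ← mul_pow, neg_mul_neg, one_mul, neg_sq]

lemma gauss_rec {b : ℝ} (hb : 0 < b) (j : ℕ) :
    2 * b * ∫ x : ℝ, x ^ (j + 1) * Real.exp (-b * x ^ 2)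
      = (j : ℝ) * ∫ x : ℝ, x ^ (j - 1) * Real.exp (-b * x ^ 2) := by
  have hderiv : ∀ x : ℝ, HasDerivAt (fun x : ℝ => x ^ j * Real.exp (-b * x ^ 2))
      ((j : ℝ) * (x ^ (j - 1) * Real.exp (-b * x ^ 2))
        - 2 * b * (x ^ (j + 1) * Real.exp (-b * x ^ 2))) x := by
    intro x
    have h1 : HasDerivAt (fun x : ℝ => Real.exp (-b * x ^ 2))
        (Real.exp (-b * x ^ 2) * (-b * (2 * x ^ 1))) x :=
      (((hasDerivAt_pow 2 x).const_mul (-b))).exp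
    have := (hasDerivAt_pow j x).fun_mul h1
    refine this.congr_deriv ?_
    ring
  have hA := (integrable_pow_mul_exp_neg_mul_sq' hb (j - 1)).const_mul (j : ℝ)
  have hB := (integrable_pow_mul_exp_neg_mul_sq' hb (j + 1)).const_mul (2 * b)
  have h0 := integral_of_hasDerivAt_of_tendsto hderiv (hA.sub hB)
    (tendsto_pow_mul_exp_neg_mul_sq_atBot hb j) (tendsto_pow_mul_exp_neg_mul_sq_atTop hb j)
  rw [sub_zero, integral_sub hA hB, sub_eq_zero, integral_const_mul, integral_const_mul] at h0
  exact h0.symm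

lemma integral_gaussianReal_eq {v : ℝ≥0} (hv : v ≠ 0) (g : ℝ → ℝ) :
    ∫ x, g x ∂(gaussianReal 0 v) = ∫ x, gaussianPDFReal 0 v x * g x := by
  rw [gaussianReal_of_var_ne_zero 0 hv, gaussianPDF_def]
  have heq : (fun x => ENNReal.ofReal (gaussianPDFReal 0 v x))
      = fun x => ((Real.toNNReal (gaussianPDFReal 0 v x) : ℝ≥0) : ℝ≥0∞) := rfl
  rw [heq, integral_withDensity_eq_integral_smul
    ((measurable_gaussianPDFReal 0 v).real_toNNReal) g]
  congr 1
  funext x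
  rw [NNReal.smul_def, Real.coe_toNNReal _ (gaussianPDFReal_nonneg 0 v x), smul_eq_mul]

lemma integrable_pow_gaussianReal (v : ℝ≥0) (k : ℕ) :
    Integrable (fun x : ℝ => x ^ k) (gaussianReal 0 v) := by
  by_cases hv : v = 0
  · subst hv
    rw [gaussianReal_zero_var]
    refine ⟨(measurable_id.pow_const k).aestronglyMeasurable, ?_⟩
    simp only [HasFiniteIntegral, lintegral_dirac]
    exact ENNReal.coe_lt_top
  · have hb : (0:ℝ) < (2 * (v:ℝ))⁻¹ := by
      have : (0:ℝ) < (v:ℝ) := lt_of_le_of_ne (v.coe_nonneg) (by exact_mod_cast (Ne.symm hv))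
      positivity
    rw [gaussianReal_of_var_ne_zero 0 hv]
    rw [integrable_withDensity_iff (measurable_gaussianPDF 0 v)
      (Filter.Eventually.of_forall fun x => ENNReal.ofReal_lt_top)]
    have : (fun x : ℝ => x ^ k * (gaussianPDF 0 v x).toReal)
        = fun x : ℝ => (Real.sqrt (2 * Real.pi * v))⁻¹ * (x ^ k * Real.exp (-(2 * (v:ℝ))⁻¹ * x ^ 2)) := by
      funext x
      rw [gaussianPDF, ENNReal.toReal_ofReal (gaussianPDFReal_nonneg 0 v x), gaussianPDFReal]
      rw [sub_zero]
      rw [show -x ^ 2 / (2 * (v:ℝ)) = -(2 * (v:ℝ))⁻¹ * x ^ 2 by ring]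
      ring
    rw [this]
    exact (integrable_pow_mul_exp_neg_mul_sq' hb k).const_mul _

lemma gauss_moment_odd (v : ℝ≥0) {k : ℕ} (hk : Odd k) :
    ∫ x : ℝ, x ^ k ∂(gaussianReal 0 v) = 0 := by
  have hone : (NNReal.mk ((-1:ℝ)^2) (sq_nonneg _) : ℝ≥0) = 1 := by ext; norm_num
  have hmap := gaussianReal_map_const_mul (μ := 0) (v := v) (-1)
  rw [hone, one_mul, mul_zero] at hmap
  have hint : ∫ x : ℝ, x ^ k ∂(gaussianReal 0 v)
      = ∫ x : ℝ, (-1 * x) ^ k ∂(gaussianReal 0 v) := by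
    conv_lhs => rw [← hmap]
    rw [integral_map (by fun_prop) (by fun_prop)]
  have h2 : ∫ x : ℝ, (-1 * x) ^ k ∂(gaussianReal 0 v)
      = - ∫ x : ℝ, x ^ k ∂(gaussianReal 0 v) := by
    simp_rw [mul_pow, hk.neg_one_pow, neg_one_mul]
    exact integral_neg _
  rw [h2] at hint
  linarith

lemma gauss_moment_conv {v : ℝ≥0} (hv : v ≠ 0) (k : ℕ) :
    ∫ x : ℝ, x ^ k ∂(gaussianReal 0 v)
      = (Real.sqrt (2 * Real.pi * v))⁻¹
        * ∫ x : ℝ, x ^ k * Real.exp (-(2 * (v:ℝ))⁻¹ * x ^ 2) := by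
  rw [integral_gaussianReal_eq hv fun x => x ^ k]
  rw [← integral_const_mul]
  congr 1
  funext x
  rw [gaussianPDFReal, sub_zero,
    show -x ^ 2 / (2 * (v:ℝ)) = -(2 * (v:ℝ))⁻¹ * x ^ 2 by ring]
  ring

lemma gauss_moment_two_four {v : ℝ≥0} :
    (∫ x : ℝ, x ^ 2 ∂(gaussianReal 0 v)) = v
    ∧ (∫ x : ℝ, x ^ 4 ∂(gaussianReal 0 v)) = 3 * (v:ℝ) ^ 2 := by
  by_cases hv : v = 0
  · subst hv
    rw [gaussianReal_zero_var]
    simp [integral_dirac]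
  · have hv' : (0:ℝ) < (v:ℝ) := lt_of_le_of_ne v.coe_nonneg (by exact_mod_cast (Ne.symm hv))
    set b : ℝ := (2 * (v:ℝ))⁻¹ with hbdef
    have hb : (0:ℝ) < b := by positivity
    set M : ℕ → ℝ := fun k => ∫ x : ℝ, x ^ k * Real.exp (-b * x ^ 2) with hM
    have hM0 : M 0 = Real.sqrt (2 * Real.pi * v) := by
      have := integral_gaussian b
      have hpib : Real.pi / b = 2 * Real.pi * v := by
        rw [hbdef]; field_simp
      rw [hM]
      simpa [hpib] using this
    have hM0pos : 0 < M 0 := by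
      rw [hM0]
      exact Real.sqrt_pos.2 (by positivity)
    have hrec1 : 2 * b * M 2 = M 0 := by
      have := gauss_rec hb 1
      simpa [hM] using this
    have hrec3 : 2 * b * M 4 = 3 * M 2 := by
      have := gauss_rec hb 3
      simpa [hM] using this
    have hm2 : (∫ x : ℝ, x ^ 2 ∂(gaussianReal 0 v)) = (M 0)⁻¹ * M 2 := by
      rw [gauss_moment_conv hv 2, ← hM0, hM]
    have hm4 : (∫ x : ℝ, x ^ 4 ∂(gaussianReal 0 v)) = (M 0)⁻¹ * M 4 := by
      rw [gauss_moment_conv hv 4, ← hM0, hM]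
    have hbv : b * (2 * (v:ℝ)) = 1 := by
      rw [hbdef]; field_simp
    constructor
    · rw [hm2]
      have : M 2 = M 0 * v := by
        nlinarith [hrec1]
      rw [this]
      field_simp
    · rw [hm4]
      have h2 : M 2 = M 0 * v := by nlinarith [hrec1]
      have h4 : M 4 = 3 * M 0 * v ^ 2 := by nlinarith [hrec3, hrec1]
      rw [h4]
      field_simp

section PiMoments

variable {n : ℕ} {v : ℝ≥0}

lemma pi_prod_pow_integrable (e : Fin n → ℕ) :
    Integrable (fun ω : Fin n → ℝ => ∏ m, (ω m) ^ (e m))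
      (Measure.pi fun _ : Fin n => gaussianReal 0 v) := by
  letI : MeasureSpace ℝ := ⟨gaussianReal 0 v⟩
  haveI : IsProbabilityMeasure (volume : Measure ℝ) :=
    inferInstanceAs (IsProbabilityMeasure (gaussianReal 0 v))
  exact Integrable.fintype_prod (f := fun i (x : ℝ) => x ^ e i)
    (fun i => integrable_pow_gaussianReal v (e i))

lemma pi_prod_pow_integral (e : Fin n → ℕ) :
    ∫ ω : Fin n → ℝ, (∏ m, (ω m) ^ (e m)) ∂(Measure.pi fun _ : Fin n => gaussianReal 0 v)
      = ∏ m, ∫ x : ℝ, x ^ (e m) ∂(gaussianReal 0 v) := by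
  letI : MeasureSpace ℝ := ⟨gaussianReal 0 v⟩
  haveI : IsProbabilityMeasure (volume : Measure ℝ) :=
    inferInstanceAs (IsProbabilityMeasure (gaussianReal 0 v))
  exact integral_fintype_prod_eq_prod (ι := Fin n) (fun i (x : ℝ) => x ^ e i)

end PiMoments

noncomputable def gmom (v : ℝ≥0) (k : ℕ) : ℝ := ∫ x : ℝ, x ^ k ∂(gaussianReal 0 v)

variable {v : ℝ≥0}

lemma pi_prod_pow_integral' {n : ℕ} (e : Fin n → ℕ) :
    ∫ ω : Fin n → ℝ, (∏ m, (ω m) ^ (e m)) ∂(Measure.pi fun _ : Fin n => gaussianReal 0 v)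
      = ∏ m, gmom v (e m) :=
  pi_prod_pow_integral e

lemma gmom_zero : gmom v 0 = 1 := by simp [gmom]
lemma gmom_one : gmom v 1 = 0 := gauss_moment_odd v odd_one
lemma gmom_two : gmom v 2 = v := gauss_moment_two_four.1
lemma gmom_three : gmom v 3 = 0 := gauss_moment_odd v ⟨1, by norm_num⟩
lemma gmom_four : gmom v 4 = 3 * (v:ℝ) ^ 2 := gauss_moment_two_four.2

section PiMoments2

variable {n : ℕ}

lemma prod_eq_single' {g : Fin n → ℝ} (i : Fin n) (h : ∀ m, m ≠ i → g m = 1) :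
    ∏ m, g m = g i :=
  Finset.prod_eq_single i (fun m _ hm => h m hm) (fun h' => absurd (Finset.mem_univ i) h')

lemma prod_eq_pair' {g : Fin n → ℝ} {i k : Fin n} (hik : i ≠ k)
    (h : ∀ m, m ≠ i → m ≠ k → g m = 1) : ∏ m, g m = g i * g k := by
  rw [← Finset.prod_pair hik]
  refine (Finset.prod_subset (Finset.subset_univ _) ?_).symm
  intro m _ hm
  simp only [Finset.mem_insert, Finset.mem_singleton, not_or] at hm
  exact h m hm.1 hm.2

lemma mono1 (ω : Fin n → ℝ) (i : Fin n) :
    ω i = ∏ m, (ω m) ^ (if m = i then 1 else 0) := by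
  simp [pow_ite, Finset.prod_ite_eq']

lemma mono2 (ω : Fin n → ℝ) (i j : Fin n) :
    ω i * ω j = ∏ m, (ω m) ^ ((if m = i then 1 else 0) + (if m = j then 1 else 0)) := by
  simp only [pow_add, Finset.prod_mul_distrib, ← mono1]

lemma mono3 (ω : Fin n → ℝ) (i j k : Fin n) :
    ω i * ω j * ω k = ∏ m, (ω m) ^
      ((if m = i then 1 else 0) + (if m = j then 1 else 0) + (if m = k then 1 else 0)) := by
  simp only [pow_add, Finset.prod_mul_distrib, ← mono1]

lemma mono4 (ω : Fin n → ℝ) (i j k l : Fin n) :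
    ω i * ω j * ω k * ω l = ∏ m, (ω m) ^
      ((if m = i then 1 else 0) + (if m = j then 1 else 0) + (if m = k then 1 else 0)
        + (if m = l then 1 else 0)) := by
  simp only [pow_add, Finset.prod_mul_distrib, ← mono1]

lemma int1 (i : Fin n) :
    Integrable (fun ω : Fin n → ℝ => ω i) (Measure.pi fun _ : Fin n => gaussianReal 0 v) :=
  (pi_prod_pow_integrable _).congr
    (Filter.Eventually.of_forall fun ω => (mono1 ω i).symm)

lemma int2 (i j : Fin n) :
    Integrable (fun ω : Fin n → ℝ => ω i * ω j)
      (Measure.pi fun _ : Fin n => gaussianReal 0 v) :=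
  (pi_prod_pow_integrable _).congr
    (Filter.Eventually.of_forall fun ω => (mono2 ω i j).symm)

lemma int3 (i j k : Fin n) :
    Integrable (fun ω : Fin n → ℝ => ω i * ω j * ω k)
      (Measure.pi fun _ : Fin n => gaussianReal 0 v) :=
  (pi_prod_pow_integrable _).congr
    (Filter.Eventually.of_forall fun ω => (mono3 ω i j k).symm)

lemma int4 (i j k l : Fin n) :
    Integrable (fun ω : Fin n → ℝ => ω i * ω j * ω k * ω l)
      (Measure.pi fun _ : Fin n => gaussianReal 0 v) :=
  (pi_prod_pow_integrable _).congr
    (Filter.Eventually.of_forall fun ω => (mono4 ω i j k l).symm)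

lemma J1 (i : Fin n) :
    ∫ ω : Fin n → ℝ, ω i ∂(Measure.pi fun _ : Fin n => gaussianReal 0 v) = 0 := by
  rw [show (fun ω : Fin n → ℝ => ω i)
      = fun ω => ∏ m, (ω m) ^ (if m = i then 1 else 0) from funext fun ω => mono1 ω i,
    pi_prod_pow_integral']
  exact Finset.prod_eq_zero (Finset.mem_univ i) (by simpa using (gmom_one (v := v)))

lemma J2 (i j : Fin n) :
    ∫ ω : Fin n → ℝ, ω i * ω j ∂(Measure.pi fun _ : Fin n => gaussianReal 0 v)
      = if i = j then (v : ℝ) else 0 := by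
  rw [show (fun ω : Fin n → ℝ => ω i * ω j) = fun ω => ∏ m, (ω m) ^
      ((if m = i then 1 else 0) + (if m = j then 1 else 0)) from funext fun ω => mono2 ω i j,
    pi_prod_pow_integral']
  by_cases hij : i = j
  · subst hij
    rw [if_pos rfl, prod_eq_single' i (fun m hm => by simp [hm, gmom_zero])]
    simpa using (gmom_two (v := v))
  · rw [if_neg hij]
    refine Finset.prod_eq_zero (Finset.mem_univ i) ?_
    have : i ≠ j := hij
    simpa [this] using (gmom_one (v := v))

lemma J3 (i j k : Fin n) :
    ∫ ω : Fin n → ℝ, ω i * ω j * ω k ∂(Measure.pi fun _ : Fin n => gaussianReal 0 v) = 0 := by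
  rw [show (fun ω : Fin n → ℝ => ω i * ω j * ω k) = fun ω => ∏ m, (ω m) ^
      ((if m = i then 1 else 0) + (if m = j then 1 else 0) + (if m = k then 1 else 0))
      from funext fun ω => mono3 ω i j k,
    pi_prod_pow_integral']
  by_cases hij : i = j
  · subst hij
    by_cases hik : i = k
    · subst hik
      exact Finset.prod_eq_zero (Finset.mem_univ i) (by simpa using (gmom_three (v := v)))
    · refine Finset.prod_eq_zero (Finset.mem_univ k) ?_
      have h1 : k ≠ i := fun h => hik h.symm
      simpa [h1] using (gmom_one (v := v))
  · by_cases hjk : j = k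
    · subst hjk
      refine Finset.prod_eq_zero (Finset.mem_univ i) ?_
      have h1 : i ≠ j := hij
      simpa [h1] using (gmom_one (v := v))
    · by_cases hik : i = k
      · refine Finset.prod_eq_zero (Finset.mem_univ j) ?_
        have h1 : j ≠ i := fun h => hij h.symm
        have h2 : j ≠ k := fun h => hij (hik.trans h.symm)
        simpa [h1, h2] using (gmom_one (v := v))
      · refine Finset.prod_eq_zero (Finset.mem_univ i) ?_
        have h1 : i ≠ j := hij
        have h2 : i ≠ k := hik
        simpa [h1, h2] using (gmom_one (v := v))

lemma J4 (i j k l : Fin n) :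
    ∫ ω : Fin n → ℝ, ω i * ω j * ω k * ω l ∂(Measure.pi fun _ : Fin n => gaussianReal 0 v)
      = (v:ℝ)^2 * ((if i = j then 1 else 0) * (if k = l then 1 else 0)
        + (if i = k then 1 else 0) * (if j = l then 1 else 0)
        + (if i = l then 1 else 0) * (if j = k then 1 else 0)) := by
  rw [show (fun ω : Fin n → ℝ => ω i * ω j * ω k * ω l) = fun ω => ∏ m, (ω m) ^
      ((if m = i then 1 else 0) + (if m = j then 1 else 0) + (if m = k then 1 else 0)
        + (if m = l then 1 else 0)) from funext fun ω => mono4 ω i j k l,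
    pi_prod_pow_integral']
  rcases eq_or_ne i j with hij | hij
  · subst hij
    rcases eq_or_ne k l with hkl | hkl
    · subst hkl
      rcases eq_or_ne i k with hik | hik
      · subst hik
        rw [prod_eq_single' i (fun m hm => by simp [hm, gmom_zero])]
        simp [gmom_four]
        ring
      · rw [prod_eq_pair' hik (fun m hmi hmk => by simp [hmi, hmk, gmom_zero])]
        have hki : k ≠ i := Ne.symm hik
        simp [hik, hki, gmom_two]
        ring
    · rcases eq_or_ne i k with hik | hik
      · have h1 : l ≠ i := fun h => hkl (hik.symm.trans h.symm)
        have h2 : l ≠ k := fun h => hkl h.symm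
        have hil : i ≠ l := fun h => h1 h.symm
        rw [Finset.prod_eq_zero (Finset.mem_univ l)
          (by simpa [h1, h2] using (gmom_one (v := v)))]
        simp [hkl, hil]
      · have h1 : k ≠ i := Ne.symm hik
        rw [Finset.prod_eq_zero (Finset.mem_univ k)
          (by simpa [h1, hkl] using (gmom_one (v := v)))]
        simp [hkl, hik]
  · rcases eq_or_ne k l with hkl | hkl
    · subst hkl
      by_cases hjk : j = k
      · have hik : i ≠ k := fun h => hij (h.trans hjk.symm)
        have hji : j ≠ i := Ne.symm hij
        rw [Finset.prod_eq_zero (Finset.mem_univ i)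
          (by simpa [hij, hik] using (gmom_one (v := v)))]
        simp [hij, hik]
      · have hji : j ≠ i := Ne.symm hij
        rw [Finset.prod_eq_zero (Finset.mem_univ j)
          (by simpa [hji, hjk] using (gmom_one (v := v)))]
        simp [hij, hjk]
    · by_cases hik : i = k
      · by_cases hjl : j = l
        · subst hik; subst hjl
          have hji : j ≠ i := Ne.symm hij
          rw [prod_eq_pair' hij (fun m hmi hmj => by simp [hmi, hmj, gmom_zero])]
          have hil : i ≠ j := hij
          simp [hij, hji, gmom_two]
          ring
        · have hji : j ≠ i := Ne.symm hij
          have hjk : j ≠ k := fun h => hij (hik.trans h.symm)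
          rw [Finset.prod_eq_zero (Finset.mem_univ j)
            (by simpa [hji, hjk, hjl] using (gmom_one (v := v)))]
          simp [hij, hjl, hjk]
      · by_cases hil : i = l
        · by_cases hjk : j = k
          · subst hil; subst hjk
            have hji : j ≠ i := Ne.symm hij
            rw [prod_eq_pair' hij (fun m hmi hmj => by simp [hmi, hmj, gmom_zero])]
            simp [hij, hji, hik, gmom_two]
            ring
          · have hji : j ≠ i := Ne.symm hij
            have hjl : j ≠ l := fun h => hij (hil.trans h.symm)
            rw [Finset.prod_eq_zero (Finset.mem_univ j)
              (by simpa [hji, hjk, hjl] using (gmom_one (v := v)))]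
            simp [hij, hik, hjk]
        · rw [Finset.prod_eq_zero (Finset.mem_univ i)
            (by simpa [hij, hik, hil] using (gmom_one (v := v)))]
          simp [hij, hik, hil]

end PiMoments2

section Forms

variable {n : ℕ} {v : ℝ≥0}

lemma repT2 (w : Fin n → ℝ) (ω : Fin n → ℝ) :
    (∑ i, w i * ω i) ^ 2 = ∑ p : Fin n × Fin n, (w p.1 * w p.2) * (ω p.1 * ω p.2) := by
  rw [sq, Finset.sum_mul_sum, ← Fintype.sum_prod_type']
  exact Fintype.sum_congr _ _ fun p => by ring

lemma repTQ (w : Fin n → ℝ) (W : Matrix (Fin n) (Fin n) ℝ) (ω : Fin n → ℝ) :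
    (∑ i, w i * ω i) * (∑ p : Fin n × Fin n, W p.1 p.2 * (ω p.1 * ω p.2))
      = ∑ q : Fin n × Fin n × Fin n,
          (w q.1 * W q.2.1 q.2.2) * (ω q.1 * ω q.2.1 * ω q.2.2) := by
  rw [Finset.sum_mul_sum, ← Fintype.sum_prod_type']
  exact Fintype.sum_congr _ _ fun q => by ring

lemma repQ2 (W : Matrix (Fin n) (Fin n) ℝ) (ω : Fin n → ℝ) :
    (∑ p : Fin n × Fin n, W p.1 p.2 * (ω p.1 * ω p.2)) ^ 2
      = ∑ q : (Fin n × Fin n) × Fin n × Fin n,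
          (W q.1.1 q.1.2 * W q.2.1 q.2.2) * (ω q.1.1 * ω q.1.2 * ω q.2.1 * ω q.2.2) := by
  rw [sq, Finset.sum_mul_sum, ← Fintype.sum_prod_type']
  exact Fintype.sum_congr _ _ fun q => by ring

lemma intT (w : Fin n → ℝ) :
    Integrable (fun ω : Fin n → ℝ => ∑ i, w i * ω i)
      (Measure.pi fun _ : Fin n => gaussianReal 0 v) :=
  integrable_finset_sum _ fun i _ => (int1 i).const_mul _

lemma intQ (W : Matrix (Fin n) (Fin n) ℝ) :
    Integrable (fun ω : Fin n → ℝ => ∑ p : Fin n × Fin n, W p.1 p.2 * (ω p.1 * ω p.2))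
      (Measure.pi fun _ : Fin n => gaussianReal 0 v) :=
  integrable_finset_sum _ fun p _ => (int2 p.1 p.2).const_mul _

lemma intT2 (w : Fin n → ℝ) :
    Integrable (fun ω : Fin n → ℝ => (∑ i, w i * ω i) ^ 2)
      (Measure.pi fun _ : Fin n => gaussianReal 0 v) := by
  have : (fun ω : Fin n → ℝ => (∑ i, w i * ω i) ^ 2)
      = fun ω => ∑ p : Fin n × Fin n, (w p.1 * w p.2) * (ω p.1 * ω p.2) :=
    funext fun ω => repT2 w ω
  rw [this]
  exact integrable_finset_sum _ fun p _ => (int2 p.1 p.2).const_mul _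

lemma intTQ (w : Fin n → ℝ) (W : Matrix (Fin n) (Fin n) ℝ) :
    Integrable (fun ω : Fin n → ℝ =>
        (∑ i, w i * ω i) * (∑ p : Fin n × Fin n, W p.1 p.2 * (ω p.1 * ω p.2)))
      (Measure.pi fun _ : Fin n => gaussianReal 0 v) := by
  have : (fun ω : Fin n → ℝ =>
        (∑ i, w i * ω i) * (∑ p : Fin n × Fin n, W p.1 p.2 * (ω p.1 * ω p.2)))
      = fun ω => ∑ q : Fin n × Fin n × Fin n,
          (w q.1 * W q.2.1 q.2.2) * (ω q.1 * ω q.2.1 * ω q.2.2) :=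
    funext fun ω => repTQ w W ω
  rw [this]
  exact integrable_finset_sum _ fun q _ => (int3 q.1 q.2.1 q.2.2).const_mul _

lemma intQ2 (W : Matrix (Fin n) (Fin n) ℝ) :
    Integrable (fun ω : Fin n → ℝ =>
        (∑ p : Fin n × Fin n, W p.1 p.2 * (ω p.1 * ω p.2)) ^ 2)
      (Measure.pi fun _ : Fin n => gaussianReal 0 v) := by
  have : (fun ω : Fin n → ℝ =>
        (∑ p : Fin n × Fin n, W p.1 p.2 * (ω p.1 * ω p.2)) ^ 2)
      = fun ω => ∑ q : (Fin n × Fin n) × Fin n × Fin n,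
          (W q.1.1 q.1.2 * W q.2.1 q.2.2) * (ω q.1.1 * ω q.1.2 * ω q.2.1 * ω q.2.2) :=
    funext fun ω => repQ2 W ω
  rw [this]
  exact integrable_finset_sum _ fun q _ => (int4 q.1.1 q.1.2 q.2.1 q.2.2).const_mul _

lemma ET (w : Fin n → ℝ) :
    ∫ ω : Fin n → ℝ, (∑ i, w i * ω i) ∂(Measure.pi fun _ : Fin n => gaussianReal 0 v)
      = 0 := by
  rw [integral_finset_sum _ fun i _ => (int1 i).const_mul _]
  simp only [integral_const_mul, J1, mul_zero, Finset.sum_const_zero]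

lemma ET2 (w : Fin n → ℝ) :
    ∫ ω : Fin n → ℝ, (∑ i, w i * ω i) ^ 2 ∂(Measure.pi fun _ : Fin n => gaussianReal 0 v)
      = (v : ℝ) * ∑ i, w i * w i := by
  simp_rw [repT2 w]
  rw [integral_finset_sum _ fun p _ => (int2 p.1 p.2).const_mul _]
  simp only [integral_const_mul, J2]
  rw [Fintype.sum_prod_type]
  simp [Finset.mul_sum, Finset.sum_mul, mul_ite, mul_zero, Finset.sum_ite_eq,
    Finset.sum_ite_eq']
  exact Finset.sum_congr rfl fun i _ => by ring

lemma EQ (W : Matrix (Fin n) (Fin n) ℝ) :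
    ∫ ω : Fin n → ℝ, (∑ p : Fin n × Fin n, W p.1 p.2 * (ω p.1 * ω p.2))
        ∂(Measure.pi fun _ : Fin n => gaussianReal 0 v)
      = (v : ℝ) * ∑ i, W i i := by
  rw [integral_finset_sum _ fun p _ => (int2 p.1 p.2).const_mul _]
  simp only [integral_const_mul, J2]
  rw [Fintype.sum_prod_type]
  simp [mul_ite, mul_zero, Finset.sum_ite_eq, Finset.sum_ite_eq']
  rw [Finset.mul_sum]
  exact Finset.sum_congr rfl fun i _ => by ring

lemma ETQ (w : Fin n → ℝ) (W : Matrix (Fin n) (Fin n) ℝ) :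
    ∫ ω : Fin n → ℝ,
        (∑ i, w i * ω i) * (∑ p : Fin n × Fin n, W p.1 p.2 * (ω p.1 * ω p.2))
        ∂(Measure.pi fun _ : Fin n => gaussianReal 0 v) = 0 := by
  simp_rw [repTQ w W]
  rw [integral_finset_sum _ fun q _ => (int3 q.1 q.2.1 q.2.2).const_mul _]
  simp only [integral_const_mul, J3, mul_zero, Finset.sum_const_zero]

lemma EQ2 (W : Matrix (Fin n) (Fin n) ℝ) :
    ∫ ω : Fin n → ℝ, (∑ p : Fin n × Fin n, W p.1 p.2 * (ω p.1 * ω p.2)) ^ 2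
        ∂(Measure.pi fun _ : Fin n => gaussianReal 0 v)
      = (v : ℝ) ^ 2 * ((∑ i, W i i) ^ 2
          + (∑ p : Fin n × Fin n, W p.1 p.2 * W p.1 p.2)
          + (∑ p : Fin n × Fin n, W p.1 p.2 * W p.2 p.1)) := by
  simp_rw [repQ2 W]
  rw [integral_finset_sum _ fun q _ => (int4 q.1.1 q.1.2 q.2.1 q.2.2).const_mul _]
  simp only [integral_const_mul, J4]
  rw [Fintype.sum_prod_type, Fintype.sum_prod_type]
  simp_rw [Fintype.sum_prod_type]
  simp [mul_add, mul_ite, ite_mul, mul_zero, zero_mul, mul_one, Finset.sum_add_distrib,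
    Finset.sum_ite_eq, Finset.sum_ite_eq', Finset.mul_sum, Finset.sum_mul, sq]
  refine congrArg₂ (· + ·) (congrArg₂ (· + ·) ?_ ?_) ?_ <;>
    exact Finset.sum_congr rfl fun x _ => Finset.sum_congr rfl fun y _ => by ring

end Forms


/-- Variance of the control barrier condition: for Gaussian noise
`ω ~ N(0, σ²·I)`, `Var[(a+ω)ᵀW(a+ω) + κ] = 4σ²·aᵀWᵀWa + 2σ⁴·tr(WᵀW)`. -/
theorem variance_CBC
    (n : ℕ) (hn : 0 < n) (σ : ℝ) (hσ : 0 ≤ σ)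
    (W : Matrix (Fin n) (Fin n) ℝ) (hW : W.IsSymm)
    (a : Fin n → ℝ) (κ : ℝ) :
    ∫ ω : Fin n → ℝ,
        (((a + ω) ⬝ᵥ W.mulVec (a + ω) + κ)
          - (a ⬝ᵥ W.mulVec a + σ ^ 2 * W.trace + κ)) ^ 2
        ∂(Measure.pi fun _ : Fin n => gaussianReal 0 ⟨σ ^ 2, sq_nonneg σ⟩)
      = 4 * σ ^ 2 * (a ⬝ᵥ (Wᵀ * W).mulVec a)
        + 2 * σ ^ 4 * (Wᵀ * W).trace := by
  set v : ℝ≥0 := ⟨σ ^ 2, sq_nonneg σ⟩ with hv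
  have hvr : (v : ℝ) = σ ^ 2 := rfl
  set w : Fin n → ℝ := W.mulVec a with hwdef
  set c : ℝ := σ ^ 2 * W.trace with hcdef
  set T : (Fin n → ℝ) → ℝ := fun ω => ∑ i, w i * ω i with hT
  set Q : (Fin n → ℝ) → ℝ :=
    fun ω => ∑ p : Fin n × Fin n, W p.1 p.2 * (ω p.1 * ω p.2) with hQ
  -- symmetry of the bilinear form
  have hsym : ∀ ω : Fin n → ℝ, a ⬝ᵥ W.mulVec ω = ω ⬝ᵥ W.mulVec a := by
    intro ω
    rw [Matrix.dotProduct_mulVec, ← Matrix.mulVec_transpose, hW.eq, dotProduct_comm]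
  have repQ : ∀ ω : Fin n → ℝ, ω ⬝ᵥ W.mulVec ω = Q ω := by
    intro ω
    simp only [hQ, dotProduct, Matrix.mulVec, Finset.mul_sum]
    rw [← Fintype.sum_prod_type']
    exact Fintype.sum_congr _ _ fun p => by ring
  have hTw : ∀ ω : Fin n → ℝ, ω ⬝ᵥ w = T ω := by
    intro ω
    rw [dotProduct_comm]
    rfl
  have hpt : ∀ ω : Fin n → ℝ,
      (((a + ω) ⬝ᵥ W.mulVec (a + ω) + κ)
          - (a ⬝ᵥ W.mulVec a + σ ^ 2 * W.trace + κ)) ^ 2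
        = 4 * T ω ^ 2 + 4 * (T ω * Q ω) - (4 * c) * T ω
          + Q ω ^ 2 - (2 * c) * Q ω + c ^ 2 := by
    intro ω
    rw [Matrix.mulVec_add, dotProduct_add, add_dotProduct,
      add_dotProduct, hsym ω, repQ ω, ← hwdef, hTw ω, ← hcdef]
    ring
  rw [integral_congr_ae (Filter.Eventually.of_forall hpt)]
  -- integrability
  have I1 : Integrable (fun ω : Fin n → ℝ => 4 * T ω ^ 2)
      (Measure.pi fun _ : Fin n => gaussianReal 0 v) := (intT2 w).const_mul 4
  have I2 : Integrable (fun ω : Fin n → ℝ => 4 * (T ω * Q ω))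
      (Measure.pi fun _ : Fin n => gaussianReal 0 v) := (intTQ w W).const_mul 4
  have I3 : Integrable (fun ω : Fin n → ℝ => (4 * c) * T ω)
      (Measure.pi fun _ : Fin n => gaussianReal 0 v) := (intT w).const_mul (4 * c)
  have I4 : Integrable (fun ω : Fin n → ℝ => Q ω ^ 2)
      (Measure.pi fun _ : Fin n => gaussianReal 0 v) := intQ2 W
  have I5 : Integrable (fun ω : Fin n → ℝ => (2 * c) * Q ω)
      (Measure.pi fun _ : Fin n => gaussianReal 0 v) := (intQ W).const_mul (2 * c)
  haveI : IsProbabilityMeasure (Measure.pi fun _ : Fin n => gaussianReal 0 v) :=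
    inferInstance
  have I6 : Integrable (fun _ : Fin n → ℝ => c ^ 2)
      (Measure.pi fun _ : Fin n => gaussianReal 0 v) := integrable_const _
  have Ia : Integrable (fun ω : Fin n → ℝ => 4 * T ω ^ 2 + 4 * (T ω * Q ω))
      (Measure.pi fun _ : Fin n => gaussianReal 0 v) := I1.add I2
  have Ib : Integrable (fun ω : Fin n → ℝ => 4 * T ω ^ 2 + 4 * (T ω * Q ω) - 4 * c * T ω)
      (Measure.pi fun _ : Fin n => gaussianReal 0 v) := Ia.sub I3
  have Ic : Integrable (fun ω : Fin n → ℝ =>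
      4 * T ω ^ 2 + 4 * (T ω * Q ω) - 4 * c * T ω + Q ω ^ 2)
      (Measure.pi fun _ : Fin n => gaussianReal 0 v) := Ib.add I4
  have Id : Integrable (fun ω : Fin n → ℝ =>
      4 * T ω ^ 2 + 4 * (T ω * Q ω) - 4 * c * T ω + Q ω ^ 2 - 2 * c * Q ω)
      (Measure.pi fun _ : Fin n => gaussianReal 0 v) := Ic.sub I5
  rw [integral_add Id I6, integral_sub Ic I5, integral_add Ib I4, integral_sub Ia I3,
    integral_add I1 I2]
  simp only [integral_const_mul]
  simp only [hT, hQ]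
  rw [ET2 w, ETQ w W, ET w, EQ2 W, EQ W, integral_const]
  simp only [measure_univ, probReal_univ, ENNReal.toReal_one, smul_eq_mul, one_mul, mul_zero]
  -- algebraic identifications
  have F4 : W.trace = ∑ i, W i i := by
    simp [Matrix.trace, Matrix.diag]
  have F1 : a ⬝ᵥ (Wᵀ * W).mulVec a = ∑ i, w i * w i := by
    rw [← Matrix.mulVec_mulVec, Matrix.dotProduct_mulVec, Matrix.vecMul_transpose, ← hwdef]
    rfl
  have F2 : (Wᵀ * W).trace = ∑ p : Fin n × Fin n, W p.1 p.2 * W p.1 p.2 := by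
    simp only [Matrix.trace, Matrix.diag, Matrix.mul_apply, Matrix.transpose_apply]
    rw [Finset.sum_comm, ← Fintype.sum_prod_type']
  have F3 : (∑ p : Fin n × Fin n, W p.1 p.2 * W p.2 p.1)
      = ∑ p : Fin n × Fin n, W p.1 p.2 * W p.1 p.2 := by
    refine Fintype.sum_congr _ _ fun p => ?_
    rw [hW.apply p.1 p.2]
  rw [F1, F2, F3, hvr, hcdef, F4]
  ring
end

section
/- Let n be a positive integer, let w be a random vector in ℝⁿ whose law P is the product measure of n independent standard one-dimensional Gaussian measures N(0,1), let L be a real n×n matrix, μ ∈ ℝⁿ, a ∈ ℝⁿ, and set Σ = L·Lᵀ with aᵀΣa > 0. Let λ ∈ (0,1), b ∈ ℝ, and let t ∈ ℝ satisfy (2/√π)·∫₀ᵗ exp(−u²) du = 1 − 2λ. Then P({w : aᵀ(μ + L·w) ≤ b}) ≤ λ if and only if aᵀμ − b ≥ t·√(2·aᵀΣa). -/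
open MeasureTheory ProbabilityTheory Matrix Real
open scoped NNReal ENNReal

lemma gauss_pdf_conv (v1 v2 : ℝ≥0) (h1 : v1 ≠ 0) (h2 : v2 ≠ 0) (y : ℝ) :
    ∫ x : ℝ, gaussianPDFReal 0 v1 x * gaussianPDFReal x v2 y
      = gaussianPDFReal 0 (v1 + v2) y := by
  have hs1 : (0:ℝ) < v1 := lt_of_le_of_ne (v1 : ℝ≥0).coe_nonneg (by exact_mod_cast (Ne.symm h1))
  have hs2 : (0:ℝ) < v2 := lt_of_le_of_ne (v2 : ℝ≥0).coe_nonneg (by exact_mod_cast (Ne.symm h2))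
  have h1' : (v1:ℝ) ≠ 0 := ne_of_gt hs1
  have h2' : (v2:ℝ) ≠ 0 := ne_of_gt hs2
  have hsum : (0:ℝ) < (v1:ℝ) + (v2:ℝ) := by linarith
  have hsum' : (v1:ℝ) + (v2:ℝ) ≠ 0 := ne_of_gt hsum
  set A : ℝ := ((v1:ℝ) + (v2:ℝ)) / (2 * (v1:ℝ) * (v2:ℝ)) with hA
  have hApos : 0 < A := by positivity
  set B : ℝ := (v1:ℝ) / ((v1:ℝ) + (v2:ℝ)) with hB
  have key : ∀ x : ℝ, gaussianPDFReal 0 v1 x * gaussianPDFReal x v2 y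
      = (√(2 * π * (v1:ℝ)))⁻¹ * (√(2 * π * (v2:ℝ)))⁻¹
          * rexp (- y ^ 2 / (2 * ((v1:ℝ) + (v2:ℝ)))) * rexp (-A * (x - B * y) ^ 2) := by
    intro x
    simp only [gaussianPDFReal, sub_zero]
    rw [mul_mul_mul_comm, ← Real.exp_add]
    conv_rhs => rw [mul_assoc, ← Real.exp_add]
    congr 1
    rw [Real.exp_eq_exp, hA, hB]
    field_simp
    ring
  simp_rw [key]
  rw [MeasureTheory.integral_const_mul]
  have hI : ∫ x : ℝ, rexp (-A * (x - B * y) ^ 2) = Real.sqrt (π / A) := by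
    rw [← integral_gaussian A]
    exact MeasureTheory.integral_sub_right_eq_self (fun x => rexp (-A * x ^ 2)) (B * y)
  rw [hI]
  simp only [gaussianPDFReal, sub_zero]
  have hcoe : ((v1 + v2 : ℝ≥0) : ℝ) = (v1:ℝ) + (v2:ℝ) := by push_cast; ring
  have hC : √(π / A) * ((√(2 * π * (v1:ℝ)))⁻¹ * (√(2 * π * (v2:ℝ)))⁻¹)
      = (√(2 * π * ((v1:ℝ) + (v2:ℝ))))⁻¹ := by
    rw [← Real.sqrt_inv (2 * π * (v1:ℝ)), ← Real.sqrt_inv (2 * π * (v2:ℝ)),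
        ← Real.sqrt_inv (2 * π * ((v1:ℝ) + (v2:ℝ))),
        ← Real.sqrt_mul (by positivity : (0:ℝ) ≤ (2 * π * (v1:ℝ))⁻¹),
        ← Real.sqrt_mul (by positivity : (0:ℝ) ≤ π / A)]
    congr 1
    rw [hA]; field_simp
  rw [hcoe, ← hC]
  ring

lemma gauss_pdf_meas (v : ℝ≥0) (y : ℝ) :
    Measurable (fun x : ℝ => gaussianPDFReal x v y) := by
  unfold gaussianPDFReal
  fun_prop

lemma gauss_pdf_conv_integrable (v1 v2 : ℝ≥0) (y : ℝ) :
    Integrable (fun x : ℝ => gaussianPDFReal 0 v1 x * gaussianPDFReal x v2 y) := by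
  refine Integrable.mono' ((integrable_gaussianPDFReal 0 v1).const_mul (√(2 * π * (v2:ℝ)))⁻¹)
    ((measurable_gaussianPDFReal 0 v1).mul (gauss_pdf_meas v2 y)).aestronglyMeasurable
    (ae_of_all _ fun x => ?_)
  rw [Real.norm_eq_abs, abs_of_nonneg (mul_nonneg (gaussianPDFReal_nonneg _ _ _) (gaussianPDFReal_nonneg _ _ _))]
  rw [mul_comm ((√(2 * π * (v2:ℝ)))⁻¹)]
  refine mul_le_mul_of_nonneg_left ?_ (gaussianPDFReal_nonneg 0 v1 x)
  unfold gaussianPDFReal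
  calc (√(2 * π * (v2:ℝ)))⁻¹ * rexp (-(y - x) ^ 2 / (2 * (v2:ℝ)))
      ≤ (√(2 * π * (v2:ℝ)))⁻¹ * 1 := by
        refine mul_le_mul_of_nonneg_left ?_ (by positivity)
        rw [Real.exp_le_one_iff]
        have h0 : (0:ℝ) ≤ (y - x) ^ 2 / (2 * (v2:ℝ)) := by positivity
        have heq : -(y - x) ^ 2 / (2 * (v2:ℝ)) = -((y - x) ^ 2 / (2 * (v2:ℝ))) := by ring
        linarith [heq ▸ neg_nonpos_of_nonneg h0]
    _ = (√(2 * π * (v2:ℝ)))⁻¹ := mul_one _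

lemma gauss_pdf_conv' (v1 v2 : ℝ≥0) (h1 : v1 ≠ 0) (h2 : v2 ≠ 0) (y : ℝ) :
    ∫⁻ x : ℝ, gaussianPDF 0 v1 x * gaussianPDF x v2 y = gaussianPDF 0 (v1 + v2) y := by
  unfold gaussianPDF
  have : ∀ x : ℝ, ENNReal.ofReal (gaussianPDFReal 0 v1 x) * ENNReal.ofReal (gaussianPDFReal x v2 y)
      = ENNReal.ofReal (gaussianPDFReal 0 v1 x * gaussianPDFReal x v2 y) := fun x =>
    (ENNReal.ofReal_mul (gaussianPDFReal_nonneg 0 v1 x)).symm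
  simp_rw [this]
  rw [← MeasureTheory.ofReal_integral_eq_lintegral_ofReal (gauss_pdf_conv_integrable v1 v2 y)
    (ae_of_all _ fun x => mul_nonneg (gaussianPDFReal_nonneg _ _ _) (gaussianPDFReal_nonneg _ _ _))]
  rw [gauss_pdf_conv v1 v2 h1 h2 y]

lemma gauss_pdf_joint_meas (v : ℝ≥0) :
    Measurable (fun p : ℝ × ℝ => gaussianPDF p.1 v p.2) := by
  unfold gaussianPDF gaussianPDFReal
  refine Measurable.ennreal_ofReal ?_
  fun_prop

lemma gauss_conv (v1 v2 : ℝ≥0) :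
    ((gaussianReal 0 v1).prod (gaussianReal 0 v2)).map (fun p : ℝ × ℝ => p.1 + p.2)
      = gaussianReal 0 (v1 + v2) := by
  by_cases h1 : v1 = 0
  · subst h1
    rw [gaussianReal_zero_var, Measure.dirac_prod, Measure.map_map measurable_add
      measurable_prodMk_left]
    have : ((fun p : ℝ × ℝ => p.1 + p.2) ∘ Prod.mk (0:ℝ)) = ((0:ℝ) + ·) := rfl
    rw [this, gaussianReal_map_const_add, zero_add, zero_add]
  by_cases h2 : v2 = 0
  · subst h2
    rw [gaussianReal_zero_var, Measure.prod_dirac, Measure.map_map measurable_add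
      measurable_prodMk_right]
    have : ((fun p : ℝ × ℝ => p.1 + p.2) ∘ (fun x : ℝ => (x, (0:ℝ)))) = (· + (0:ℝ)) := rfl
    rw [this, gaussianReal_map_add_const, zero_add, add_zero]
  have hsum : v1 + v2 ≠ 0 := by simp [h1, h2]
  ext s hs
  rw [Measure.map_apply measurable_add hs, Measure.prod_apply (measurable_add hs)]
  have hsec : ∀ x : ℝ, gaussianReal 0 v2 (Prod.mk x ⁻¹' ((fun p : ℝ × ℝ => p.1 + p.2) ⁻¹' s))
      = ∫⁻ y in s, gaussianPDF x v2 y := by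
    intro x
    have h' : (Prod.mk x ⁻¹' ((fun p : ℝ × ℝ => p.1 + p.2) ⁻¹' s)) = (x + ·) ⁻¹' s := rfl
    rw [h', ← Measure.map_apply (measurable_const_add x) hs, gaussianReal_map_const_add,
      zero_add, gaussianReal_apply _ h2]
  simp_rw [hsec]
  have hmeas2 : Measurable (fun x : ℝ => ∫⁻ y in s, gaussianPDF x v2 y) :=
    Measurable.lintegral_prod_right' ((gauss_pdf_joint_meas v2).comp measurable_id)
  rw [gaussianReal_of_var_ne_zero 0 h1,
    lintegral_withDensity_eq_lintegral_mul _ (measurable_gaussianPDF 0 v1) hmeas2]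
  have hswap : ∫⁻ x, gaussianPDF 0 v1 x * ∫⁻ y in s, gaussianPDF x v2 y
      = ∫⁻ y in s, ∫⁻ x, gaussianPDF 0 v1 x * gaussianPDF x v2 y := by
    calc ∫⁻ x, gaussianPDF 0 v1 x * ∫⁻ y in s, gaussianPDF x v2 y
        = ∫⁻ x, ∫⁻ y in s, gaussianPDF 0 v1 x * gaussianPDF x v2 y :=
          lintegral_congr fun x => (lintegral_const_mul _
            ((gauss_pdf_joint_meas v2).comp measurable_prodMk_left)).symm
      _ = ∫⁻ y in s, ∫⁻ x, gaussianPDF 0 v1 x * gaussianPDF x v2 y := by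
          refine lintegral_lintegral_swap ?_
          exact (((measurable_gaussianPDF 0 v1).comp measurable_fst).mul
            (gauss_pdf_joint_meas v2)).aemeasurable
  simp only [Pi.mul_apply]
  rw [hswap]
  have : ∀ y : ℝ, ∫⁻ x, gaussianPDF 0 v1 x * gaussianPDF x v2 y = gaussianPDF 0 (v1 + v2) y :=
    fun y => gauss_pdf_conv' v1 v2 h1 h2 y
  simp_rw [this]
  rw [← gaussianReal_apply 0 hsum s]

open Matrix in
lemma meas_dot {m : ℕ} (c : Fin m → ℝ) : Measurable fun w : Fin m → ℝ => c ⬝ᵥ w := by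
  unfold dotProduct
  fun_prop

open Matrix in
lemma gauss_map_dot : ∀ (n : ℕ) (c : Fin n → ℝ),
    (Measure.pi fun _ : Fin n => gaussianReal 0 1).map (fun w => c ⬝ᵥ w)
      = gaussianReal 0 (∑ i, (⟨c i ^ 2, sq_nonneg _⟩ : ℝ≥0)) := by
  intro n
  induction n with
  | zero =>
    intro c
    have hc : (fun w : Fin 0 → ℝ => c ⬝ᵥ w) = fun _ => (0:ℝ) := by
      funext w; simp [dotProduct]
    rw [hc, Measure.map_const]
    simp
    exact (gaussianReal_zero_var 0).symm
  | succ n ih =>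
    intro c
    set e := MeasurableEquiv.piFinSuccAbove (fun _ : Fin (n+1) => ℝ) 0 with he
    have hmp := measurePreserving_piFinSuccAbove (fun _ : Fin (n+1) => gaussianReal 0 1) 0
    have hcomp : (fun w : Fin (n+1) → ℝ => c ⬝ᵥ w)
        = (((fun p : ℝ × ℝ => p.1 + p.2)
            ∘ (Prod.map (fun x : ℝ => c 0 * x) (fun w' : Fin n → ℝ => (fun j => c j.succ) ⬝ᵥ w')))
            ∘ e) := by
      funext w
      simp only [Function.comp_apply, e, MeasurableEquiv.piFinSuccAbove_apply, Prod.map]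
      rw [dotProduct]
      rw [Fin.sum_univ_succ]
      simp [dotProduct, Fin.removeNth, Fin.succAbove, Fin.tail]
    have hm2 : Measurable ((fun p : ℝ × ℝ => p.1 + p.2)
        ∘ (Prod.map (fun x : ℝ => c 0 * x) (fun w' : Fin n → ℝ => (fun j => c j.succ) ⬝ᵥ w'))) :=
      measurable_add.comp ((measurable_const_mul (c 0)).prodMap (meas_dot _))
    have hm3 : Measurable (Prod.map (fun x : ℝ => c 0 * x)
        (fun w' : Fin n → ℝ => (fun j => c j.succ) ⬝ᵥ w')) :=
      (measurable_const_mul (c 0)).prodMap (meas_dot _)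
    rw [hcomp, ← Measure.map_map hm2 e.measurable, hmp.map_eq,
      ← Measure.map_map measurable_add hm3,
      ← Measure.map_prod_map _ _ (measurable_const_mul (c 0)) (meas_dot _)]
    rw [gaussianReal_map_const_mul (c 0), mul_one, mul_zero]
    rw [ih (fun j => c j.succ)]
    rw [gauss_conv]
    congr 1
    exact (Fin.sum_univ_succ (fun i => (⟨c i ^ 2, sq_nonneg _⟩ : ℝ≥0))).symm

lemma gauss_cdf (V : ℝ≥0) (hV : V ≠ 0) (x : ℝ) :
    ((gaussianReal 0 V) (Set.Iic x)).toReal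
      = 1/2 + (√π)⁻¹ * ∫ u in (0:ℝ)..(x / √(2 * (V:ℝ))), rexp (-u^2) := by
  have hVpos : (0:ℝ) < V := lt_of_le_of_ne (V : ℝ≥0).coe_nonneg (by exact_mod_cast (Ne.symm hV))
  set σ : ℝ := √(2 * (V:ℝ)) with hσ
  have hσpos : 0 < σ := Real.sqrt_pos.2 (by positivity)
  have hσsq : σ ^ 2 = 2 * (V:ℝ) := Real.sq_sqrt (by positivity)
  rw [gaussianReal_apply_eq_integral _ hV, ENNReal.toReal_ofReal
    (MeasureTheory.setIntegral_nonneg measurableSet_Iic fun y _ => gaussianPDFReal_nonneg _ _ _)]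
  have hint : Integrable (gaussianPDFReal 0 V) := integrable_gaussianPDFReal 0 V
  have half : ∫ y in Set.Iic (0:ℝ), gaussianPDFReal 0 V y = 1/2 := by
    have heven : ∫ y in Set.Iic (0:ℝ), gaussianPDFReal 0 V y
        = ∫ y in Set.Ioi (0:ℝ), gaussianPDFReal 0 V y := by
      have hsym : ∫ y in Set.Iic (0:ℝ), gaussianPDFReal 0 V y
          = ∫ y in Set.Iic (0:ℝ), gaussianPDFReal 0 V (-y) :=
        setIntegral_congr_fun measurableSet_Iic fun y _ => by
          unfold gaussianPDFReal; norm_num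
      rw [hsym, integral_comp_neg_Iic, neg_zero]
    have htot : (∫ y in Set.Iic (0:ℝ), gaussianPDFReal 0 V y)
        + ∫ y in Set.Ioi (0:ℝ), gaussianPDFReal 0 V y = 1 := by
      rw [intervalIntegral.integral_Iic_add_Ioi hint.integrableOn hint.integrableOn]
      exact integral_gaussianPDFReal_eq_one 0 hV
    rw [heven] at htot ⊢
    linarith
  have hsplit : ∫ y in Set.Iic x, gaussianPDFReal 0 V y
      = (∫ y in Set.Iic (0:ℝ), gaussianPDFReal 0 V y)
        + ∫ y in (0:ℝ)..x, gaussianPDFReal 0 V y := by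
    rw [← intervalIntegral.integral_Iic_sub_Iic hint.integrableOn hint.integrableOn]
    ring
  rw [hsplit, half]
  congr 1
  have hsub : ∫ u in (0:ℝ)..(x / σ), gaussianPDFReal 0 V (σ * u)
      = σ⁻¹ • ∫ y in (σ * 0)..(σ * (x / σ)), gaussianPDFReal 0 V y :=
    intervalIntegral.integral_comp_mul_left _ (ne_of_gt hσpos)
  rw [mul_zero, mul_div_cancel₀ _ (ne_of_gt hσpos)] at hsub
  have hexp : ∀ u : ℝ, gaussianPDFReal 0 V (σ * u) = (√(2 * π * (V:ℝ)))⁻¹ * rexp (-u^2) := by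
    intro u
    unfold gaussianPDFReal
    congr 1
    rw [sub_zero]
    congr 1
    rw [mul_pow, hσsq]
    field_simp
  rw [smul_eq_mul] at hsub
  have : ∫ y in (0:ℝ)..x, gaussianPDFReal 0 V y = σ * ∫ u in (0:ℝ)..(x / σ), gaussianPDFReal 0 V (σ * u) := by
    rw [hsub, ← mul_assoc, mul_inv_cancel₀ (ne_of_gt hσpos), one_mul]
  rw [this]
  simp_rw [hexp]
  rw [intervalIntegral.integral_const_mul, ← mul_assoc]
  congr 1
  rw [hσ, ← Real.sqrt_inv, ← Real.sqrt_mul (by positivity)]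
  rw [show (2 * (V:ℝ)) * (2 * π * (V:ℝ))⁻¹ = π⁻¹ by field_simp]
  exact Real.sqrt_inv π

open Matrix in
lemma G_strictMono : StrictMono (fun s : ℝ => ∫ u in (0:ℝ)..s, rexp (-u^2)) := by
  intro s1 s2 h
  have hc : ∀ a b : ℝ, IntervalIntegrable (fun u : ℝ => rexp (-u^2)) volume a b :=
    fun a b => Continuous.intervalIntegrable (by fun_prop) a b
  have hadd := intervalIntegral.integral_add_adjacent_intervals (hc 0 s1) (hc s1 s2)
  have hpos : 0 < ∫ u in s1..s2, rexp (-u^2) :=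
    intervalIntegral.intervalIntegral_pos_of_pos (hc s1 s2) (fun x => Real.exp_pos _) h
  simp only
  linarith

/-- Multivariate linear chance constraint (Lemma 2): for a Gaussian vector
`z = μ + L·w` with covariance `Σ = L·Lᵀ`, `aᵀΣa > 0`, and
`t = erf⁻¹(1 − 2λ)`, one has `P(aᵀz ≤ b) ≤ λ ↔ aᵀμ − b ≥ t·√(2 aᵀΣa)`. -/
theorem multivariate_chance_constraint
    (n : ℕ) (hn : 0 < n)
    (L : Matrix (Fin n) (Fin n) ℝ) (μ a : Fin n → ℝ)
    (hpos : 0 < a ⬝ᵥ (L * Lᵀ).mulVec a)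
    (lam : ℝ) (hlam : lam ∈ Set.Ioo (0:ℝ) 1) (b t : ℝ)
    (ht : (2 / Real.sqrt Real.pi) * ∫ u in (0:ℝ)..t, Real.exp (-u ^ 2)
            = 1 - 2 * lam) :
    ((Measure.pi fun _ : Fin n => gaussianReal 0 1)
        {w : Fin n → ℝ | a ⬝ᵥ (μ + L.mulVec w) ≤ b}).toReal ≤ lam
      ↔ a ⬝ᵥ μ - b ≥ t * Real.sqrt (2 * (a ⬝ᵥ (L * Lᵀ).mulVec a)) := by
  classical
  set c : Fin n → ℝ := Lᵀ.mulVec a with hc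
  have hVc : a ⬝ᵥ (L * Lᵀ).mulVec a = ∑ i, c i ^ 2 := by
    rw [← Matrix.mulVec_mulVec, Matrix.dotProduct_mulVec, ← Matrix.mulVec_transpose, ← hc]
    simp [dotProduct, sq]
  set Vnn : ℝ≥0 := ∑ i, (⟨c i ^ 2, sq_nonneg _⟩ : ℝ≥0) with hVnn
  have hVcoe : (Vnn : ℝ) = a ⬝ᵥ (L * Lᵀ).mulVec a := by
    rw [hVc, hVnn]
    push_cast
    exact NNReal.coe_sum _ _
  have hVne : Vnn ≠ 0 := by
    intro h0
    rw [h0] at hVcoe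
    simp at hVcoe
    exact absurd hVcoe.symm (ne_of_gt hpos)
  -- rewrite the set
  have hset : {w : Fin n → ℝ | a ⬝ᵥ (μ + L.mulVec w) ≤ b}
      = (fun w : Fin n → ℝ => c ⬝ᵥ w) ⁻¹' Set.Iic (b - a ⬝ᵥ μ) := by
    ext w
    simp only [Set.mem_setOf_eq, Set.mem_preimage, Set.mem_Iic]
    rw [dotProduct_add, Matrix.dotProduct_mulVec, ← Matrix.mulVec_transpose, ← hc]
    constructor <;> intro h <;> linarith
  have hmeasure : ((Measure.pi fun _ : Fin n => gaussianReal 0 1)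
        {w : Fin n → ℝ | a ⬝ᵥ (μ + L.mulVec w) ≤ b}).toReal
      = 1/2 + (√π)⁻¹ * ∫ u in (0:ℝ)..((b - a ⬝ᵥ μ) / √(2 * (Vnn:ℝ))), rexp (-u^2) := by
    rw [hset, ← Measure.map_apply (meas_dot c) measurableSet_Iic, gauss_map_dot n c, ← hVnn,
      gauss_cdf Vnn hVne]
  rw [hmeasure, hVcoe] at *
  -- now pure real analysis
  have hsqpi : (0:ℝ) < √π := Real.sqrt_pos.2 Real.pi_pos
  have hlam' : lam = 1/2 - (√π)⁻¹ * ∫ u in (0:ℝ)..t, rexp (-u^2) := by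
    have h2 : (2 / √π) * ∫ u in (0:ℝ)..t, rexp (-u^2) = 1 - 2 * lam := by
      simpa using ht
    field_simp at h2 ⊢
    linarith
  set V : ℝ := a ⬝ᵥ (L * Lᵀ).mulVec a with hV
  have hσpos : (0:ℝ) < √(2 * V) := Real.sqrt_pos.2 (by positivity)
  have hGneg : ∫ u in (0:ℝ)..(-t), rexp (-u^2) = -∫ u in (0:ℝ)..t, rexp (-u^2) := by
    have : ∫ u in (0:ℝ)..(-t), rexp (-u^2) = ∫ u in (0:ℝ)..(-t), rexp (-(-u)^2) := by
      simp
    rw [this, intervalIntegral.integral_comp_neg (fun u => rexp (-u^2)), neg_zero,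
      intervalIntegral.integral_symm, neg_neg]
  constructor
  · intro h
    have h1 : ∫ u in (0:ℝ)..((b - a ⬝ᵥ μ) / √(2 * V)), rexp (-u^2)
        ≤ ∫ u in (0:ℝ)..(-t), rexp (-u^2) := by
      rw [hGneg, hlam'] at *
      nlinarith [hsqpi, inv_pos.2 hsqpi]
    have h2 : (b - a ⬝ᵥ μ) / √(2 * V) ≤ -t := by
      by_contra hcon
      push_neg at hcon
      exact absurd h1 (not_le.2 (G_strictMono hcon))
    rw [div_le_iff₀ hσpos] at h2
    have := h2
    rw [ge_iff_le]
    nlinarith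
  · intro h
    have h2 : (b - a ⬝ᵥ μ) / √(2 * V) ≤ -t := by
      rw [div_le_iff₀ hσpos]
      nlinarith
    have h1 : ∫ u in (0:ℝ)..((b - a ⬝ᵥ μ) / √(2 * V)), rexp (-u^2)
        ≤ ∫ u in (0:ℝ)..(-t), rexp (-u^2) := G_strictMono.monotone h2
    rw [hGneg] at h1
    rw [hlam']
    have hinvpos : (0:ℝ) < (√π)⁻¹ := inv_pos.2 hsqpi
    nlinarith
end
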